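/- Let ℂ^d = ℂ^{d_S} ⊗ ℂ^{d_B} and let H = H_0 + H_S ⊗ 1 + 1 ⊗ H_B + H_{SB} be a Hermitian operator, where H_0 is a real multiple of the identity and H_S, H_B, H_{SB} are traceless Hermitian operators. Let H_S have eigenvalues E^S_k and orthonormal eigenvectors |E^S_k⟩. Then every density matrix ρ on ℂ^d with reduced state ρ^S = Tr_B ρ satisfies ‖H_{SB}‖∞ + ½ ‖i[ρ^S, H_S] + i Tr_B[ρ, H_{SB}]‖₁ ≥ 2⁻¹·2·Σ_{(k,l)∈P} |E^S_k − E^S_l| · |ρ^S_{kl}| for every collection P of pairwise-disjoint index pairs, and in particular ‖H_{SB}‖∞ + ½ ‖i[ρ^S, H_S] + i Tr_B[ρ, H_{SB}]‖₁ ≥ max_{k,l} |E^S_k − E^S_l| · |ρ^S_{kl}|, where ρ^S_{kl} = ⟨E^S_k| ρ^S |E^S_l⟩. -/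

import Mathlib

open MeasureTheory Matrix Filter
open scoped BigOperators Kronecker InnerProductSpace ComplexOrder

noncomputable section

namespace PQSM

variable {n : Type*} [Fintype n] [DecidableEq n]

instance : MeasurableSpace (EuclideanSpace ℂ n) := MeasurableSpace.comap WithLp.ofLp MeasurableSpace.pi

/-- The outer product (pure state density matrix) `|u⟩⟨u|` of a vector with itself. -/
def outer (u : EuclideanSpace ℂ n) : Matrix n n ℂ :=
  fun i j => u i * (starRingEnd ℂ) (u j)

/-- Operator norm of a matrix acting on Euclidean space. -/
def opNorm (A : Matrix n n ℂ) : ℝ := ‖Matrix.toEuclideanCLM (𝕜 := ℂ) A‖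

/-- Trace norm `Tr √(AᴴA)`. -/
def traceNorm (A : Matrix n n ℂ) : ℝ :=
  ((((Matrix.posSemidef_conjTranspose_mul_self A).1.eigenvectorUnitary : Matrix n n ℂ) *
    Matrix.diagonal ((fun x : ℝ => (x : ℂ)) ∘ Real.sqrt ∘ (Matrix.posSemidef_conjTranspose_mul_self A).1.eigenvalues) *
    (star (Matrix.posSemidef_conjTranspose_mul_self A).1.eigenvectorUnitary : Matrix n n ℂ)).trace).re

/-- Trace distance `½‖ρ − σ‖₁`. -/
def traceDist (ρ σ : Matrix n n ℂ) : ℝ := traceNorm (ρ - σ) / 2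

/-- Real expectation value `Re Tr[B ρ]`. -/
def expVal (B ρ : Matrix n n ℂ) : ℝ := ((B * ρ).trace).re

/-- Purity `Tr[ρ²]`. -/
def purity (ρ : Matrix n n ℂ) : ℝ := ((ρ * ρ).trace).re

/-- Effective dimension `1/Tr[ρ²]`. -/
def dEff (ρ : Matrix n n ℂ) : ℝ := 1 / purity ρ

/-- An orthogonal projector. -/
def IsProjector (P : Matrix n n ℂ) : Prop := P.IsHermitian ∧ P * P = P

/-- A density matrix: positive semidefinite with unit trace. -/
def IsDensityMatrix (ρ : Matrix n n ℂ) : Prop := ρ.PosSemidef ∧ ρ.trace = 1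

/-- The microcanonical state `Π_R/d_R` of the subspace with projector `P` of dimension `dR`. -/
def mcState (P : Matrix n n ℂ) (dR : ℕ) : Matrix n n ℂ := ((dR : ℂ))⁻¹ • P

/-- `μ` is the uniform (rotation-invariant, Haar) probability measure on the unit sphere of the
subspace of `ℂ^n` whose orthogonal projector is `P`: `μ` is a probability measure, it is
concentrated on the unit vectors fixed by `P`, and it is invariant under every unitary of the
full space that preserves the subspace (equivalently, commutes with `P`). -/
def IsUniformOnSphere (P : Matrix n n ℂ) (μ : Measure (EuclideanSpace ℂ n)) : Prop :=
  IsProbabilityMeasure μ ∧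
  (∀ᵐ u ∂μ, ‖u‖ = 1 ∧ Matrix.toEuclideanCLM (𝕜 := ℂ) P u = u) ∧
  ∀ U ∈ Matrix.unitaryGroup n ℂ,
    U * P = P * U →
    Measure.map (fun u => Matrix.toEuclideanCLM (𝕜 := ℂ) U u) μ = μ

/-- Non-degenerate energy gaps. -/
def HasNonDegenerateGaps {H : Matrix n n ℂ} (hH : H.IsHermitian) : Prop :=
  ∀ k l m p : n, hH.eigenvalues k - hH.eigenvalues l = hH.eigenvalues m - hH.eigenvalues p →
    (k = l ∧ m = p) ∨ (k = m ∧ l = p)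

/-- Dephasing `$[ρ] = Σ_k |E_k⟩⟨E_k| ρ |E_k⟩⟨E_k|` with respect to the eigenbasis of `H`. -/
def dephase {H : Matrix n n ℂ} (hH : H.IsHermitian) (ρ : Matrix n n ℂ) : Matrix n n ℂ :=
  ∑ k, outer (hH.eigenvectorBasis k) * ρ * outer (hH.eigenvectorBasis k)

/-- Time evolution `ρ_t = e^{−iHt} ρ e^{iHt}`. -/
def evol (H : Matrix n n ℂ) (t : ℝ) (ρ : Matrix n n ℂ) : Matrix n n ℂ :=
  NormedSpace.exp ((-(Complex.I * t)) • H) * ρ * NormedSpace.exp ((Complex.I * t) • H)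

variable {nS nB : Type*} [Fintype nS] [Fintype nB]

/-- Partial trace over the second (bath) tensor factor. -/
def ptraceB (M : Matrix (nS × nB) (nS × nB) ℂ) : Matrix nS nS ℂ :=
  fun i j => ∑ b, M (i, b) (j, b)

/-- Partial trace over the first (system) tensor factor. -/
def ptraceS (M : Matrix (nS × nB) (nS × nB) ℂ) : Matrix nB nB ℂ :=
  fun i j => ∑ a, M (a, i) (a, j)

/-- Tensor product of vectors. -/
def tensorVec (u : EuclideanSpace ℂ nS) (v : EuclideanSpace ℂ nB) :
    EuclideanSpace ℂ (nS × nB) := WithLp.toLp 2 (fun p => u p.1 * v p.2)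

/-- Von Neumann entropy `−Σ λ_i log λ_i` (with `0 log 0 = 0`). -/
def vnEntropy (ρ : Matrix n n ℂ) : ℝ :=
  if h : ρ.IsHermitian then -∑ i, h.eigenvalues i * Real.log (h.eigenvalues i) else 0

/-- Quantum mutual information `I_{SB}(ρ) = S(ρ^S) + S(ρ^B) − S(ρ)`. -/
def mutualInfo [DecidableEq nS] [DecidableEq nB] (ρ : Matrix (nS × nB) (nS × nB) ℂ) : ℝ :=
  vnEntropy (ptraceB ρ) + vnEntropy (ptraceS ρ) - vnEntropy ρ



section Aux
variable {n : Type*} [Fintype n] [DecidableEq n]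

private lemma aux_toCLM_apply (A : Matrix n n ℂ) (x : EuclideanSpace ℂ n) (i : n) :
    (Matrix.toEuclideanCLM (𝕜 := ℂ) A x) i = ∑ j, A i j * x j := by
  simp [Matrix.mulVec, dotProduct]

private lemma aux_inner_toCLM (A : Matrix n n ℂ) (u w : EuclideanSpace ℂ n) :
    ⟪u, Matrix.toEuclideanCLM (𝕜 := ℂ) A w⟫_ℂ
      = ∑ i, ∑ j, (starRingEnd ℂ) (u i) * A i j * w j := by
  rw [PiLp.inner_apply]
  refine Finset.sum_congr rfl fun i _ => ?_
  rw [RCLike.inner_apply, aux_toCLM_apply, Finset.sum_mul]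
  exact Finset.sum_congr rfl fun j _ => by ring

private lemma aux_toCLM_eigen {A : Matrix n n ℂ} (hA : A.IsHermitian) (a : n) :
    Matrix.toEuclideanCLM (𝕜 := ℂ) A (hA.eigenvectorBasis a)
      = (hA.eigenvalues a : ℂ) • (hA.eigenvectorBasis a : EuclideanSpace ℂ n) := by
  apply PiLp.ext
  intro i
  have h := congrFun (hA.mulVec_eigenvectorBasis a) i
  simpa [Matrix.toLin'_apply] using h

private lemma aux_inner_toCLM_spectral {A : Matrix n n ℂ} (hA : A.IsHermitian)
    (u w : EuclideanSpace ℂ n) :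
    ⟪u, Matrix.toEuclideanCLM (𝕜 := ℂ) A w⟫_ℂ
      = ∑ a, (hA.eigenvalues a : ℂ) * ⟪u, (hA.eigenvectorBasis a : EuclideanSpace ℂ n)⟫_ℂ
          * ⟪(hA.eigenvectorBasis a : EuclideanSpace ℂ n), w⟫_ℂ := by
  conv_lhs => rw [← hA.eigenvectorBasis.sum_repr w]
  rw [map_sum, inner_sum]
  refine Finset.sum_congr rfl fun a _ => ?_
  rw [_root_.map_smul, aux_toCLM_eigen hA a, smul_smul, inner_smul_right,
    hA.eigenvectorBasis.repr_apply_apply]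
  ring

private lemma aux_master {ι α : Type*} [Fintype ι] [Fintype α]
    (u w : ι → EuclideanSpace ℂ n) (hu : Orthonormal ℂ u) (hw : Orthonormal ℂ w)
    (c : α → ℝ) (p q : α → EuclideanSpace ℂ n) (M₁ M₂ : ℝ)
    (hM₁ : 0 ≤ M₁) (hM₂ : 0 ≤ M₂)
    (hp : ∀ a, ‖p a‖ ≤ M₁) (hq : ∀ a, ‖q a‖ ≤ M₂)
    (T : EuclideanSpace ℂ n →L[ℂ] EuclideanSpace ℂ n)
    (hT : ∀ i, ⟪u i, T (w i)⟫_ℂ = ∑ a, (c a : ℂ) * ⟪u i, p a⟫_ℂ * ⟪q a, w i⟫_ℂ) :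
    ∑ i, ‖⟪u i, T (w i)⟫_ℂ‖ ≤ (∑ a, |c a|) * (M₁ * M₂) := by
  calc ∑ i, ‖⟪u i, T (w i)⟫_ℂ‖
      ≤ ∑ i, ∑ a, |c a| * (‖⟪u i, p a⟫_ℂ‖ * ‖⟪q a, w i⟫_ℂ‖) := by
        refine Finset.sum_le_sum fun i _ => ?_
        rw [hT i]
        refine (norm_sum_le _ _).trans (Finset.sum_le_sum fun a _ => ?_)
        rw [norm_mul, norm_mul]
        simp [abs_of_nonneg, Complex.norm_real, mul_assoc]
    _ = ∑ a, |c a| * ∑ i, ‖⟪u i, p a⟫_ℂ‖ * ‖⟪q a, w i⟫_ℂ‖ := by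
        rw [Finset.sum_comm]
        exact Finset.sum_congr rfl fun a _ => (Finset.mul_sum _ _ _).symm
    _ ≤ ∑ a, |c a| * (M₁ * M₂) := by
        refine Finset.sum_le_sum fun a _ => mul_le_mul_of_nonneg_left ?_ (abs_nonneg _)
        have hcs : ∑ i, ‖⟪u i, p a⟫_ℂ‖ * ‖⟪q a, w i⟫_ℂ‖
            ≤ Real.sqrt (∑ i, ‖⟪u i, p a⟫_ℂ‖ ^ 2) * Real.sqrt (∑ i, ‖⟪q a, w i⟫_ℂ‖ ^ 2) := by
          have h := Finset.sum_mul_sq_le_sq_mul_sq Finset.univ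
            (fun i => ‖⟪u i, p a⟫_ℂ‖) (fun i => ‖⟪q a, w i⟫_ℂ‖)
          have hnn : (0:ℝ) ≤ ∑ i, ‖⟪u i, p a⟫_ℂ‖ * ‖⟪q a, w i⟫_ℂ‖ :=
            Finset.sum_nonneg fun i _ => mul_nonneg (norm_nonneg _) (norm_nonneg _)
          calc ∑ i, ‖⟪u i, p a⟫_ℂ‖ * ‖⟪q a, w i⟫_ℂ‖
              = Real.sqrt ((∑ i, ‖⟪u i, p a⟫_ℂ‖ * ‖⟪q a, w i⟫_ℂ‖) ^ 2) := by
                rw [Real.sqrt_sq hnn]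
            _ ≤ Real.sqrt ((∑ i, ‖⟪u i, p a⟫_ℂ‖ ^ 2) * ∑ i, ‖⟪q a, w i⟫_ℂ‖ ^ 2) :=
                Real.sqrt_le_sqrt h
            _ = _ := Real.sqrt_mul (Finset.sum_nonneg fun i _ => sq_nonneg _) _
        refine hcs.trans (mul_le_mul ?_ ?_ (Real.sqrt_nonneg _) hM₁)
        · have hb : ∑ i, ‖⟪u i, p a⟫_ℂ‖ ^ 2 ≤ ‖p a‖ ^ 2 := by
            simpa using hu.sum_inner_products_le (p a) (s := Finset.univ)
          calc Real.sqrt (∑ i, ‖⟪u i, p a⟫_ℂ‖ ^ 2) ≤ Real.sqrt (‖p a‖ ^ 2) :=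
                Real.sqrt_le_sqrt hb
            _ = ‖p a‖ := Real.sqrt_sq (norm_nonneg _)
            _ ≤ M₁ := hp a
        · have hb : ∑ i, ‖⟪q a, w i⟫_ℂ‖ ^ 2 ≤ ‖q a‖ ^ 2 := by
            have h' : ∀ i, ‖⟪q a, w i⟫_ℂ‖ = ‖⟪w i, q a⟫_ℂ‖ := fun i => norm_inner_symm _ _
            simp_rw [h']
            simpa using hw.sum_inner_products_le (q a) (s := Finset.univ)
          calc Real.sqrt (∑ i, ‖⟪q a, w i⟫_ℂ‖ ^ 2) ≤ Real.sqrt (‖q a‖ ^ 2) :=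
                Real.sqrt_le_sqrt hb
            _ = ‖q a‖ := Real.sqrt_sq (norm_nonneg _)
            _ ≤ M₂ := hq a
    _ = (∑ a, |c a|) * (M₁ * M₂) := by rw [Finset.sum_mul]

private lemma aux_traceNorm_hermitian {A : Matrix n n ℂ} (hA : A.IsHermitian) :
    traceNorm A = ∑ a, |hA.eigenvalues a| := by
  have hAA := (Matrix.posSemidef_conjTranspose_mul_self A).1
  have h1 : traceNorm A = (cfc Real.sqrt (Aᴴ * A)).trace.re := by
    rw [hAA.cfc_eq, Matrix.IsHermitian.cfc, Unitary.conjStarAlgAut_apply]; rfl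
  have h2 : cfc Real.sqrt (Aᴴ * A) = cfc (fun x : ℝ => |x|) A := by
    rw [hA.eq, ← pow_two, ← cfc_pow_id (R := ℝ) A 2, ← cfc_comp Real.sqrt (· ^ 2 : ℝ → ℝ) A]
    congr 1
    funext x
    simp [Real.sqrt_sq_eq_abs]
  rw [h1, h2, hA.cfc_eq, Matrix.IsHermitian.cfc, Unitary.conjStarAlgAut_apply,
    Matrix.trace_mul_cycle,
    (Matrix.mem_unitaryGroup_iff').mp hA.eigenvectorUnitary.2, Matrix.one_mul,
    Matrix.trace_diagonal, Complex.re_sum]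
  simp

private lemma aux_psd_re_diag_nonneg {M : Matrix n n ℂ} (hM : M.PosSemidef) (i : n) :
    0 ≤ (M i i).re := by
  exact (Complex.le_def.mp hM.diag_nonneg).1

private lemma aux_traceNorm_nonneg (A : Matrix n n ℂ) : 0 ≤ traceNorm A := by
  rw [traceNorm, Matrix.trace_mul_cycle,
    (Matrix.mem_unitaryGroup_iff').mp (Matrix.posSemidef_conjTranspose_mul_self A).1.eigenvectorUnitary.2,
    Matrix.one_mul, Matrix.trace_diagonal, Complex.re_sum]
  exact Finset.sum_nonneg fun i _ => by simp [Real.sqrt_nonneg]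

private lemma aux_sum_eigenvalues_eq {A : Matrix n n ℂ} (hA : A.IsHermitian) :
    ∑ a, hA.eigenvalues a = A.trace.re := by
  have h : A.trace = ∑ a, Complex.ofReal (hA.eigenvalues a) := by
    exact hA.trace_eq_sum_eigenvalues
  rw [h, Complex.re_sum]
  simp

private lemma aux_sum_abs_inner_le_traceNorm {A : Matrix n n ℂ} (hA : A.IsHermitian)
    {ι : Type*} [Fintype ι] {u w : ι → EuclideanSpace ℂ n}
    (hu : Orthonormal ℂ u) (hw : Orthonormal ℂ w) :
    ∑ i, ‖⟪u i, Matrix.toEuclideanCLM (𝕜 := ℂ) A (w i)⟫_ℂ‖ ≤ traceNorm A := by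
  have h := aux_master u w hu hw hA.eigenvalues
    (fun a => (hA.eigenvectorBasis a : EuclideanSpace ℂ n))
    (fun a => (hA.eigenvectorBasis a : EuclideanSpace ℂ n)) 1 1 zero_le_one zero_le_one
    (fun a => by rw [hA.eigenvectorBasis.orthonormal.1 a])
    (fun a => by rw [hA.eigenvectorBasis.orthonormal.1 a])
    (Matrix.toEuclideanCLM (𝕜 := ℂ) A)
    (fun i => aux_inner_toCLM_spectral hA (u i) (w i))
  simpa [aux_traceNorm_hermitian hA] using h

private lemma aux_sum_abs_inner_psd_mul_le {ρ : Matrix n n ℂ} (hρ : ρ.PosSemidef)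
    (htr : ρ.trace = 1)
    (X : Matrix n n ℂ) {ι : Type*} [Fintype ι] {u w : ι → EuclideanSpace ℂ n}
    (hu : Orthonormal ℂ u) (hw : Orthonormal ℂ w) :
    ∑ i, ‖⟪u i, Matrix.toEuclideanCLM (𝕜 := ℂ) (ρ * X) (w i)⟫_ℂ‖ ≤ opNorm X := by
  set TX := Matrix.toEuclideanCLM (𝕜 := ℂ) X with hTX
  have hstar : Matrix.toEuclideanCLM (𝕜 := ℂ) Xᴴ = ContinuousLinearMap.adjoint TX := by
    rw [hTX, ← ContinuousLinearMap.star_eq_adjoint, ← map_star]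
    rfl
  have h := aux_master u w hu hw hρ.1.eigenvalues
    (fun a => (hρ.1.eigenvectorBasis a : EuclideanSpace ℂ n))
    (fun a => Matrix.toEuclideanCLM (𝕜 := ℂ) Xᴴ (hρ.1.eigenvectorBasis a)) 1 (opNorm X)
    zero_le_one (norm_nonneg _)
    (fun a => by rw [hρ.1.eigenvectorBasis.orthonormal.1 a])
    (fun a => by
      rw [hstar]
      calc ‖ContinuousLinearMap.adjoint TX (hρ.1.eigenvectorBasis a)‖
          ≤ ‖ContinuousLinearMap.adjoint TX‖ * ‖(hρ.1.eigenvectorBasis a : EuclideanSpace ℂ n)‖ :=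
            (ContinuousLinearMap.adjoint TX).le_opNorm _
        _ = opNorm X := by
            rw [hρ.1.eigenvectorBasis.orthonormal.1 a, LinearIsometryEquiv.norm_map, mul_one]
            rfl)
    (Matrix.toEuclideanCLM (𝕜 := ℂ) (ρ * X))
    (fun i => by
      rw [_root_.map_mul]
      have h1 : (Matrix.toEuclideanCLM (𝕜 := ℂ) ρ * TX) (w i)
          = Matrix.toEuclideanCLM (𝕜 := ℂ) ρ (TX (w i)) := rfl
      rw [h1, aux_inner_toCLM_spectral hρ.1 (u i) (TX (w i))]
      refine Finset.sum_congr rfl fun a _ => ?_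
      congr 1
      rw [hstar, ContinuousLinearMap.adjoint_inner_left])
  have hsum : ∑ a, |hρ.1.eigenvalues a| = 1 := by
    have h' : ∀ a, |hρ.1.eigenvalues a| = hρ.1.eigenvalues a :=
      fun a => abs_of_nonneg (hρ.eigenvalues_nonneg a)
    simp_rw [h', aux_sum_eigenvalues_eq hρ.1, htr]
    simp
  rw [hsum] at h
  simpa using h

private lemma aux_sum_abs_inner_mul_psd_le {ρ : Matrix n n ℂ} (hρ : ρ.PosSemidef)
    (htr : ρ.trace = 1)
    (X : Matrix n n ℂ) {ι : Type*} [Fintype ι] {u w : ι → EuclideanSpace ℂ n}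
    (hu : Orthonormal ℂ u) (hw : Orthonormal ℂ w) :
    ∑ i, ‖⟪u i, Matrix.toEuclideanCLM (𝕜 := ℂ) (X * ρ) (w i)⟫_ℂ‖ ≤ opNorm X := by
  set TX := Matrix.toEuclideanCLM (𝕜 := ℂ) X with hTX
  have hstar : Matrix.toEuclideanCLM (𝕜 := ℂ) Xᴴ = ContinuousLinearMap.adjoint TX := by
    rw [hTX, ← ContinuousLinearMap.star_eq_adjoint, ← map_star]
    rfl
  have h := aux_master u w hu hw hρ.1.eigenvalues
    (fun a => TX (hρ.1.eigenvectorBasis a))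
    (fun a => (hρ.1.eigenvectorBasis a : EuclideanSpace ℂ n)) (opNorm X) 1
    (norm_nonneg _) zero_le_one
    (fun a => by
      calc ‖TX (hρ.1.eigenvectorBasis a)‖
          ≤ ‖TX‖ * ‖(hρ.1.eigenvectorBasis a : EuclideanSpace ℂ n)‖ := TX.le_opNorm _
        _ = opNorm X := by rw [hρ.1.eigenvectorBasis.orthonormal.1 a, mul_one]; rfl)
    (fun a => by rw [hρ.1.eigenvectorBasis.orthonormal.1 a])
    (Matrix.toEuclideanCLM (𝕜 := ℂ) (X * ρ))
    (fun i => by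
      rw [_root_.map_mul]
      have h1 : (TX * Matrix.toEuclideanCLM (𝕜 := ℂ) ρ) (w i)
          = TX (Matrix.toEuclideanCLM (𝕜 := ℂ) ρ (w i)) := rfl
      rw [h1]
      have h2 : ⟪u i, TX (Matrix.toEuclideanCLM (𝕜 := ℂ) ρ (w i))⟫_ℂ
          = ⟪Matrix.toEuclideanCLM (𝕜 := ℂ) Xᴴ (u i),
              Matrix.toEuclideanCLM (𝕜 := ℂ) ρ (w i)⟫_ℂ := by
        rw [hstar, ContinuousLinearMap.adjoint_inner_left]
      rw [h2, aux_inner_toCLM_spectral hρ.1 _ (w i)]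
      refine Finset.sum_congr rfl fun a _ => ?_
      congr 1
      rw [hstar, ContinuousLinearMap.adjoint_inner_left])
  have hsum : ∑ a, |hρ.1.eigenvalues a| = 1 := by
    have h' : ∀ a, |hρ.1.eigenvalues a| = hρ.1.eigenvalues a :=
      fun a => abs_of_nonneg (hρ.eigenvalues_nonneg a)
    simp_rw [h', aux_sum_eigenvalues_eq hρ.1, htr]
    simp
  rw [hsum] at h
  simpa using h

private lemma aux_norm_inner_hermitian_symm {A : Matrix n n ℂ} (hA : A.IsHermitian)
    (x y : EuclideanSpace ℂ n) :
    ‖⟪x, Matrix.toEuclideanCLM (𝕜 := ℂ) A y⟫_ℂ‖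
      = ‖⟪y, Matrix.toEuclideanCLM (𝕜 := ℂ) A x⟫_ℂ‖ := by
  set T := Matrix.toEuclideanCLM (𝕜 := ℂ) A with hT
  have hsa : ContinuousLinearMap.adjoint T = T := by
    rw [hT, ← ContinuousLinearMap.star_eq_adjoint, ← map_star]
    exact congrArg _ hA.eq
  have h : ⟪y, T x⟫_ℂ = (starRingEnd ℂ) ⟪x, T y⟫_ℂ := by
    rw [← ContinuousLinearMap.adjoint_inner_left T x y, hsa, ← inner_conj_symm]
  rw [h, RCLike.norm_conj]

end Aux

section AuxTensor
variable {nS nB : Type*} [Fintype nS] [Fintype nB]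

private lemma aux_ptraceB_conjTranspose (M : Matrix (nS × nB) (nS × nB) ℂ) :
    (ptraceB M)ᴴ = ptraceB Mᴴ := by
  funext i j
  simp [ptraceB, Matrix.conjTranspose_apply, map_sum]

private lemma aux_ptraceB_smul (c : ℂ) (M : Matrix (nS × nB) (nS × nB) ℂ) :
    ptraceB (c • M) = c • ptraceB M := by
  funext i j
  simp [ptraceB, Finset.mul_sum]

private lemma aux_isHermitian_comm_smul {n : Type*} [Fintype n] {M N : Matrix n n ℂ}
    (hM : M.IsHermitian) (hN : N.IsHermitian) :
    (Complex.I • (M * N - N * M)).IsHermitian := by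
  rw [Matrix.IsHermitian, Matrix.conjTranspose_smul, Matrix.conjTranspose_sub,
    Matrix.conjTranspose_mul, Matrix.conjTranspose_mul, hM.eq, hN.eq]
  simp only [Complex.star_def, Complex.conj_I, neg_smul, smul_sub]
  abel

private lemma aux_isHermitian_ptraceB_comm_smul {ρ H : Matrix (nS × nB) (nS × nB) ℂ}
    (hρ : ρ.IsHermitian) (hH : H.IsHermitian) :
    (Complex.I • ptraceB (ρ * H - H * ρ)).IsHermitian := by
  rw [Matrix.IsHermitian, Matrix.conjTranspose_smul, aux_ptraceB_conjTranspose,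
    Matrix.conjTranspose_sub, Matrix.conjTranspose_mul, Matrix.conjTranspose_mul, hρ.eq, hH.eq]
  have h : ptraceB (H * ρ - ρ * H) = -ptraceB (ρ * H - H * ρ) := by
    funext i j
    simp [ptraceB, ← Finset.sum_neg_distrib]
  rw [h]
  simp [Complex.star_def, Complex.conj_I]

private lemma aux_inner_tensorVec (u u' : EuclideanSpace ℂ nS) (v v' : EuclideanSpace ℂ nB) :
    ⟪tensorVec u v, tensorVec u' v'⟫_ℂ = ⟪u, u'⟫_ℂ * ⟪v, v'⟫_ℂ := by
  simp only [PiLp.inner_apply, RCLike.inner_apply]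
  rw [Finset.sum_mul_sum]
  rw [← Finset.sum_product']
  refine Finset.sum_congr rfl fun p _ => ?_
  simp only [tensorVec, PiLp.toLp_apply, _root_.map_mul]
  ring

private lemma aux_orthonormal_tensor {ι κ : Type*} {x : ι → EuclideanSpace ℂ nS}
    {y : κ → EuclideanSpace ℂ nB} (hx : Orthonormal ℂ x) (hy : Orthonormal ℂ y) :
    Orthonormal ℂ (fun p : ι × κ => tensorVec (x p.1) (y p.2)) := by
  classical
  rw [orthonormal_iff_ite] at hx hy ⊢
  intro p q
  rw [aux_inner_tensorVec, hx, hy]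
  by_cases h1 : p.1 = q.1 <;> by_cases h2 : p.2 = q.2 <;>
    simp [h1, h2, Prod.ext_iff]

variable [DecidableEq nS] [DecidableEq nB]

private lemma aux_inner_ptraceB (M : Matrix (nS × nB) (nS × nB) ℂ) (u w : EuclideanSpace ℂ nS) :
    ⟪u, Matrix.toEuclideanCLM (𝕜 := ℂ) (ptraceB M) w⟫_ℂ
      = ∑ β, ⟪tensorVec u (EuclideanSpace.single β (1:ℂ)),
          Matrix.toEuclideanCLM (𝕜 := ℂ) M (tensorVec w (EuclideanSpace.single β (1:ℂ)))⟫_ℂ := by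
  have rhs : ∀ β : nB, ⟪tensorVec u (EuclideanSpace.single β (1:ℂ)),
      Matrix.toEuclideanCLM (𝕜 := ℂ) M (tensorVec w (EuclideanSpace.single β (1:ℂ)))⟫_ℂ
      = ∑ i, ∑ j, (starRingEnd ℂ) (u i) * M (i, β) (j, β) * w j := by
    intro β
    rw [aux_inner_toCLM]
    rw [Fintype.sum_prod_type]
    refine Finset.sum_congr rfl fun i _ => ?_
    have h : ∀ b : nB, ∑ q : nS × nB,
        (starRingEnd ℂ) (tensorVec u (EuclideanSpace.single β (1:ℂ)) (i, b))
        * M (i, b) q * (tensorVec w (EuclideanSpace.single β (1:ℂ)) q)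
        = if b = β then ∑ j, (starRingEnd ℂ) (u i) * M (i, b) (j, β) * w j else 0 := by
      intro b
      rw [Fintype.sum_prod_type]
      simp only [tensorVec, PiLp.toLp_apply, EuclideanSpace.single_apply, _root_.map_mul, apply_ite,
        _root_.map_one, _root_.map_zero, mul_ite, mul_one, mul_zero, ite_mul, zero_mul]
      by_cases hb : b = β
      · rw [if_pos hb]
        refine Finset.sum_congr rfl fun j _ => ?_
        rw [Finset.sum_ite_eq' Finset.univ β]
        simp [hb]
      · simp [hb]
    rw [Finset.sum_congr rfl fun b _ => h b]
    rw [Finset.sum_ite_eq' Finset.univ β]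
    simp
  rw [Finset.sum_congr rfl fun β _ => rhs β]
  rw [aux_inner_toCLM]
  simp only [ptraceB]
  simp only [Finset.mul_sum, Finset.sum_mul]
  conv_rhs => rw [Finset.sum_comm]
  refine Finset.sum_congr rfl fun i _ => ?_
  exact Finset.sum_comm

/-- The key bound for the partial-trace commutator term. -/
lemma aux_ptrace_comm_bound {ρ X : Matrix (nS × nB) (nS × nB) ℂ}
    (hρ : ρ.PosSemidef) (htr : ρ.trace = 1)
    {ι : Type*} [Fintype ι] {u w : ι → EuclideanSpace ℂ nS}
    (hu : Orthonormal ℂ u) (hw : Orthonormal ℂ w) :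
    ∑ i, ‖⟪u i, Matrix.toEuclideanCLM (𝕜 := ℂ)
        (Complex.I • ptraceB (ρ * X - X * ρ)) (w i)⟫_ℂ‖ ≤ 2 * opNorm X := by
  classical
  set C : Matrix (nS × nB) (nS × nB) ℂ := ρ * X - X * ρ with hC
  have hsingle : Orthonormal ℂ
      (fun β : nB => (EuclideanSpace.single β (1:ℂ) : EuclideanSpace ℂ nB)) := by
    have h := (EuclideanSpace.basisFun nB ℂ).orthonormal
    have e : ⇑(EuclideanSpace.basisFun nB ℂ)
        = fun β => (EuclideanSpace.single β (1:ℂ) : EuclideanSpace ℂ nB) := by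
      funext β
      exact EuclideanSpace.basisFun_apply nB ℂ β
    rwa [e] at h
  have hU := aux_orthonormal_tensor hu hsingle
  have hW := aux_orthonormal_tensor hw hsingle
  set F : ι × nB → ℝ := fun y => ‖⟪tensorVec (u y.1) (EuclideanSpace.single y.2 (1:ℂ)),
    Matrix.toEuclideanCLM (𝕜 := ℂ) C
      (tensorVec (w y.1) (EuclideanSpace.single y.2 (1:ℂ)))⟫_ℂ‖ with hF
  have hflat : ∑ y : ι × nB, F y ≤ 2 * opNorm X := by
    calc ∑ y : ι × nB, F y
        ≤ ∑ y : ι × nB, (‖⟪tensorVec (u y.1) (EuclideanSpace.single y.2 (1:ℂ)),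
              Matrix.toEuclideanCLM (𝕜 := ℂ) (ρ * X)
                (tensorVec (w y.1) (EuclideanSpace.single y.2 (1:ℂ)))⟫_ℂ‖
            + ‖⟪tensorVec (u y.1) (EuclideanSpace.single y.2 (1:ℂ)),
              Matrix.toEuclideanCLM (𝕜 := ℂ) (X * ρ)
                (tensorVec (w y.1) (EuclideanSpace.single y.2 (1:ℂ)))⟫_ℂ‖) := by
          refine Finset.sum_le_sum fun y _ => ?_
          simp only [hF, hC, _root_.map_sub, ContinuousLinearMap.sub_apply, inner_sub_right]
          exact norm_sub_le _ _
      _ = _ + _ := Finset.sum_add_distrib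
      _ ≤ opNorm X + opNorm X :=
          add_le_add (aux_sum_abs_inner_psd_mul_le hρ htr X hU hW)
            (aux_sum_abs_inner_mul_psd_le hρ htr X hU hW)
      _ = 2 * opNorm X := by ring
  have hsplitsum : ∑ y : ι × nB, F y = ∑ i, ∑ β, F (i, β) := Fintype.sum_prod_type F
  calc ∑ i, ‖⟪u i, Matrix.toEuclideanCLM (𝕜 := ℂ)
        (Complex.I • ptraceB C) (w i)⟫_ℂ‖
      = ∑ i, ‖⟪u i, Matrix.toEuclideanCLM (𝕜 := ℂ) (ptraceB C) (w i)⟫_ℂ‖ := by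
        refine Finset.sum_congr rfl fun i _ => ?_
        rw [_root_.map_smul, ContinuousLinearMap.smul_apply, inner_smul_right, norm_mul,
          Complex.norm_I, one_mul]
    _ ≤ ∑ i, ∑ β, F (i, β) := by
        refine Finset.sum_le_sum fun i _ => ?_
        rw [aux_inner_ptraceB]
        refine (norm_sum_le _ _).trans (le_of_eq ?_)
        refine Finset.sum_congr rfl fun β _ => ?_
        rw [hF]
    _ = ∑ y : ι × nB, F y := hsplitsum.symm
    _ ≤ 2 * opNorm X := hflat

end AuxTensor

/-- slow states must decohere in the eigenbasis of `H_S`: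
`‖H_{SB}‖∞ + ½‖dρ^S/dt‖₁ ≥ Σ_{(k,l)∈P} |E^S_k − E^S_l||ρ^S_{kl}|` for every collection of
pairwise-disjoint index pairs, and in particular `≥ |E^S_k − E^S_l||ρ^S_{kl}|` for all `k, l`. -/
theorem slow_states_decohere
    (dS dB : ℕ)
    (HS : Matrix (Fin dS) (Fin dS) ℂ) (hHS : HS.IsHermitian) (hHStr : HS.trace = 0)
    (HB : Matrix (Fin dB) (Fin dB) ℂ) (hHB : HB.IsHermitian) (hHBtr : HB.trace = 0)
    (HSB : Matrix (Fin dS × Fin dB) (Fin dS × Fin dB) ℂ) (hHSB : HSB.IsHermitian)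
    (hHSBtr : HSB.trace = 0)
    (c : ℝ)
    (H : Matrix (Fin dS × Fin dB) (Fin dS × Fin dB) ℂ)
    (hHdef : H = (c : ℂ) • 1 + HS ⊗ₖ (1 : Matrix (Fin dB) (Fin dB) ℂ)
        + (1 : Matrix (Fin dS) (Fin dS) ℂ) ⊗ₖ HB + HSB)
    (hH : H.IsHermitian)
    (ES : Fin dS → ℝ) (vS : Fin dS → EuclideanSpace ℂ (Fin dS))
    (hvS : Orthonormal ℂ vS)
    (heig : ∀ k, Matrix.toEuclideanCLM (𝕜 := ℂ) HS (vS k) = (ES k : ℂ) • vS k)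
    (ρ : Matrix (Fin dS × Fin dB) (Fin dS × Fin dB) ℂ) (hρ : IsDensityMatrix ρ) :
    (∀ P : Finset (Fin dS × Fin dS),
      (∀ p ∈ P, p.1 ≠ p.2) →
      (∀ p ∈ P, ∀ q ∈ P, p ≠ q → p.1 ≠ q.1 ∧ p.1 ≠ q.2 ∧ p.2 ≠ q.1 ∧ p.2 ≠ q.2) →
      ∑ p ∈ P, |ES p.1 - ES p.2|
          * ‖⟪vS p.1, Matrix.toEuclideanCLM (𝕜 := ℂ) (ptraceB ρ) (vS p.2)⟫_ℂ‖
        ≤ opNorm HSB + traceNorm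
            (Complex.I • (ptraceB ρ * HS - HS * ptraceB ρ)
              + Complex.I • ptraceB (ρ * HSB - HSB * ρ)) / 2) ∧
    ∀ k l : Fin dS,
      |ES k - ES l| * ‖⟪vS k, Matrix.toEuclideanCLM (𝕜 := ℂ) (ptraceB ρ) (vS l)⟫_ℂ‖
        ≤ opNorm HSB + traceNorm
            (Complex.I • (ptraceB ρ * HS - HS * ptraceB ρ)
              + Complex.I • ptraceB (ρ * HSB - HSB * ρ)) / 2 := by
  classical
  have hρpsd := hρ.1
  have hρtr := hρ.2
  have hρH : ρ.IsHermitian := hρpsd.1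
  set ρS : Matrix (Fin dS) (Fin dS) ℂ := ptraceB ρ with hρSdef
  have hρSH : ρS.IsHermitian := by
    rw [Matrix.IsHermitian, hρSdef, aux_ptraceB_conjTranspose, hρH.eq]
  set A1 : Matrix (Fin dS) (Fin dS) ℂ := Complex.I • (ρS * HS - HS * ρS) with hA1def
  set A2 : Matrix (Fin dS) (Fin dS) ℂ := Complex.I • ptraceB (ρ * HSB - HSB * ρ) with hA2def
  have hA1H : A1.IsHermitian := aux_isHermitian_comm_smul hρSH hHS
  have hA2H : A2.IsHermitian := aux_isHermitian_ptraceB_comm_smul hρH hHSB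
  have hAH : (A1 + A2).IsHermitian := hA1H.add hA2H
  set C : Matrix (Fin dS × Fin dB) (Fin dS × Fin dB) ℂ := Complex.I • (ρ * HSB - HSB * ρ)
    with hCdef
  have hA2C : A2 = ptraceB C := by rw [hA2def, hCdef, aux_ptraceB_smul]
  have hTHS : ∀ (k : Fin dS) (x : EuclideanSpace ℂ (Fin dS)),
      ⟪vS k, Matrix.toEuclideanCLM (𝕜 := ℂ) HS x⟫_ℂ = (ES k : ℂ) * ⟪vS k, x⟫_ℂ := by
    intro k x
    have hsa : ContinuousLinearMap.adjoint (Matrix.toEuclideanCLM (𝕜 := ℂ) HS)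
        = Matrix.toEuclideanCLM (𝕜 := ℂ) HS := by
      rw [← ContinuousLinearMap.star_eq_adjoint, ← map_star]
      exact congrArg _ hHS.eq
    calc ⟪vS k, Matrix.toEuclideanCLM (𝕜 := ℂ) HS x⟫_ℂ
        = ⟪ContinuousLinearMap.adjoint (Matrix.toEuclideanCLM (𝕜 := ℂ) HS) (vS k), x⟫_ℂ :=
          (ContinuousLinearMap.adjoint_inner_left _ x (vS k)).symm
      _ = ⟪Matrix.toEuclideanCLM (𝕜 := ℂ) HS (vS k), x⟫_ℂ := by rw [hsa]
      _ = ⟪(ES k : ℂ) • vS k, x⟫_ℂ := by rw [heig k]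
      _ = (ES k : ℂ) * ⟪vS k, x⟫_ℂ := by
          rw [inner_smul_left, Complex.conj_ofReal]
  have hA1entry : ∀ k l : Fin dS, ⟪vS k, Matrix.toEuclideanCLM (𝕜 := ℂ) A1 (vS l)⟫_ℂ
      = Complex.I * (((ES l : ℂ) - (ES k : ℂ))
          * ⟪vS k, Matrix.toEuclideanCLM (𝕜 := ℂ) ρS (vS l)⟫_ℂ) := by
    intro k l
    rw [hA1def, _root_.map_smul, ContinuousLinearMap.smul_apply, inner_smul_right, map_sub,
      ContinuousLinearMap.sub_apply, inner_sub_right, _root_.map_mul, _root_.map_mul]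
    have t1 : (Matrix.toEuclideanCLM (𝕜 := ℂ) ρS * Matrix.toEuclideanCLM (𝕜 := ℂ) HS) (vS l)
        = Matrix.toEuclideanCLM (𝕜 := ℂ) ρS (Matrix.toEuclideanCLM (𝕜 := ℂ) HS (vS l)) := rfl
    have t2 : (Matrix.toEuclideanCLM (𝕜 := ℂ) HS * Matrix.toEuclideanCLM (𝕜 := ℂ) ρS) (vS l)
        = Matrix.toEuclideanCLM (𝕜 := ℂ) HS (Matrix.toEuclideanCLM (𝕜 := ℂ) ρS (vS l)) := rfl
    rw [t1, t2, heig l, _root_.map_smul, inner_smul_right, hTHS k _]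
    ring
  have hA1norm : ∀ k l : Fin dS, ‖⟪vS k, Matrix.toEuclideanCLM (𝕜 := ℂ) A1 (vS l)⟫_ℂ‖
      = |ES k - ES l| * ‖⟪vS k, Matrix.toEuclideanCLM (𝕜 := ℂ) ρS (vS l)⟫_ℂ‖ := by
    intro k l
    rw [hA1entry k l, norm_mul, norm_mul, Complex.norm_I, one_mul, ← Complex.ofReal_sub,
      Complex.norm_real, Real.norm_eq_abs, abs_sub_comm]
  have main : ∀ P : Finset (Fin dS × Fin dS),
      (∀ p ∈ P, p.1 ≠ p.2) →
      (∀ p ∈ P, ∀ q ∈ P, p ≠ q → p.1 ≠ q.1 ∧ p.1 ≠ q.2 ∧ p.2 ≠ q.1 ∧ p.2 ≠ q.2) →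
      ∑ p ∈ P, |ES p.1 - ES p.2|
          * ‖⟪vS p.1, Matrix.toEuclideanCLM (𝕜 := ℂ) ρS (vS p.2)⟫_ℂ‖
        ≤ opNorm HSB + traceNorm (A1 + A2) / 2 := by
    intro P hne hdisj
    set f : {p // p ∈ P} × Bool → Fin dS := fun x => cond x.2 x.1.1.1 x.1.1.2 with hf
    set g : {p // p ∈ P} × Bool → Fin dS := fun x => cond x.2 x.1.1.2 x.1.1.1 with hg
    have hinjf : Function.Injective f := by
      rintro ⟨⟨p, hp⟩, bp⟩ ⟨⟨q, hq⟩, bq⟩ hfab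
      by_cases hpq : p = q
      · subst hpq
        cases bp <;> cases bq
        · rfl
        · exact absurd hfab.symm (hne p hp)
        · exact absurd hfab (hne p hp)
        · rfl
      · obtain ⟨h11, h12, h21, h22⟩ := hdisj p hp q hq (by exact hpq)
        cases bp <;> cases bq
        · exact absurd hfab h22
        · exact absurd hfab h21
        · exact absurd hfab h12
        · exact absurd hfab h11
    have hinjg : Function.Injective g := by
      rintro ⟨⟨p, hp⟩, bp⟩ ⟨⟨q, hq⟩, bq⟩ hfab
      by_cases hpq : p = q
      · subst hpq
        cases bp <;> cases bq
        · rfl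
        · exact absurd hfab (hne p hp)
        · exact absurd hfab.symm (hne p hp)
        · rfl
      · obtain ⟨h11, h12, h21, h22⟩ := hdisj p hp q hq (by exact hpq)
        cases bp <;> cases bq
        · exact absurd hfab h11
        · exact absurd hfab h12
        · exact absurd hfab h21
        · exact absurd hfab h22
    have hou : Orthonormal ℂ (fun x => vS (f x)) := hvS.comp f hinjf
    have how : Orthonormal ℂ (fun x => vS (g x)) := hvS.comp g hinjg
    have hdouble : ∀ B : Matrix (Fin dS) (Fin dS) ℂ, B.IsHermitian →
        ∑ x : {p // p ∈ P} × Bool, ‖⟪vS (f x), Matrix.toEuclideanCLM (𝕜 := ℂ) B (vS (g x))⟫_ℂ‖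
          = 2 * ∑ p ∈ P, ‖⟪vS p.1, Matrix.toEuclideanCLM (𝕜 := ℂ) B (vS p.2)⟫_ℂ‖ := by
      intro B hB
      rw [Fintype.sum_prod_type]
      have hterm : ∀ s : {p // p ∈ P},
          ∑ b : Bool, ‖⟪vS (f (s, b)), Matrix.toEuclideanCLM (𝕜 := ℂ) B (vS (g (s, b)))⟫_ℂ‖
          = 2 * ‖⟪vS s.1.1, Matrix.toEuclideanCLM (𝕜 := ℂ) B (vS s.1.2)⟫_ℂ‖ := by
        intro s
        rw [Fintype.sum_bool]
        have e1 : f (s, true) = s.1.1 := rfl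
        have e2 : g (s, true) = s.1.2 := rfl
        have e3 : f (s, false) = s.1.2 := rfl
        have e4 : g (s, false) = s.1.1 := rfl
        rw [e1, e2, e3, e4, aux_norm_inner_hermitian_symm hB (vS s.1.2) (vS s.1.1)]
        ring
      rw [Finset.sum_congr rfl fun s _ => hterm s, ← Finset.mul_sum]
      congr 1
      exact Finset.sum_coe_sort P
        (fun p => ‖⟪vS p.1, Matrix.toEuclideanCLM (𝕜 := ℂ) B (vS p.2)⟫_ℂ‖)
    have claim_a : ∑ p ∈ P, ‖⟪vS p.1, Matrix.toEuclideanCLM (𝕜 := ℂ) (A1 + A2) (vS p.2)⟫_ℂ‖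
        ≤ traceNorm (A1 + A2) / 2 := by
      have h : ∑ x : {p // p ∈ P} × Bool,
          ‖⟪vS (f x), Matrix.toEuclideanCLM (𝕜 := ℂ) (A1 + A2) (vS (g x))⟫_ℂ‖
          ≤ traceNorm (A1 + A2) :=
        aux_sum_abs_inner_le_traceNorm hAH hou how
      rw [hdouble (A1 + A2) hAH] at h
      linarith
    have claim_b : ∑ p ∈ P, ‖⟪vS p.1, Matrix.toEuclideanCLM (𝕜 := ℂ) A2 (vS p.2)⟫_ℂ‖
        ≤ opNorm HSB := by
      have h2 := hdouble A2 hA2H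
      have hb : ∑ x : {p // p ∈ P} × Bool,
          ‖⟪vS (f x), Matrix.toEuclideanCLM (𝕜 := ℂ) A2 (vS (g x))⟫_ℂ‖ ≤ 2 * opNorm HSB := by
        rw [hA2def]
        exact aux_ptrace_comm_bound hρpsd hρtr hou how
      rw [h2] at hb
      linarith
    have hsplit : ∀ p ∈ P, |ES p.1 - ES p.2|
        * ‖⟪vS p.1, Matrix.toEuclideanCLM (𝕜 := ℂ) ρS (vS p.2)⟫_ℂ‖
        ≤ ‖⟪vS p.1, Matrix.toEuclideanCLM (𝕜 := ℂ) (A1 + A2) (vS p.2)⟫_ℂ‖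
          + ‖⟪vS p.1, Matrix.toEuclideanCLM (𝕜 := ℂ) A2 (vS p.2)⟫_ℂ‖ := by
      intro p _
      rw [← hA1norm p.1 p.2]
      have e : ⟪vS p.1, Matrix.toEuclideanCLM (𝕜 := ℂ) A1 (vS p.2)⟫_ℂ
          = ⟪vS p.1, Matrix.toEuclideanCLM (𝕜 := ℂ) (A1 + A2) (vS p.2)⟫_ℂ
            - ⟪vS p.1, Matrix.toEuclideanCLM (𝕜 := ℂ) A2 (vS p.2)⟫_ℂ := by
        rw [map_add, ContinuousLinearMap.add_apply, inner_add_right]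
        ring
      rw [e]
      exact norm_sub_le _ _
    calc ∑ p ∈ P, |ES p.1 - ES p.2|
        * ‖⟪vS p.1, Matrix.toEuclideanCLM (𝕜 := ℂ) ρS (vS p.2)⟫_ℂ‖
        ≤ ∑ p ∈ P, (‖⟪vS p.1, Matrix.toEuclideanCLM (𝕜 := ℂ) (A1 + A2) (vS p.2)⟫_ℂ‖
            + ‖⟪vS p.1, Matrix.toEuclideanCLM (𝕜 := ℂ) A2 (vS p.2)⟫_ℂ‖) :=
          Finset.sum_le_sum hsplit
      _ = (∑ p ∈ P, ‖⟪vS p.1, Matrix.toEuclideanCLM (𝕜 := ℂ) (A1 + A2) (vS p.2)⟫_ℂ‖)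
            + ∑ p ∈ P, ‖⟪vS p.1, Matrix.toEuclideanCLM (𝕜 := ℂ) A2 (vS p.2)⟫_ℂ‖ :=
          Finset.sum_add_distrib
      _ ≤ traceNorm (A1 + A2) / 2 + opNorm HSB := add_le_add claim_a claim_b
      _ = opNorm HSB + traceNorm (A1 + A2) / 2 := by ring
  refine ⟨main, ?_⟩
  intro k l
  by_cases hkl : k = l
  · subst hkl
    simp only [sub_self, abs_zero, zero_mul]
    have h1 : (0:ℝ) ≤ opNorm HSB := norm_nonneg _
    have h2 : (0:ℝ) ≤ traceNorm (A1 + A2) := aux_traceNorm_nonneg _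
    linarith
  · have h := main {(k, l)} (by simp [hkl]) (by
      intro p hp q hq hpq
      rw [Finset.mem_singleton] at hp hq
      exact absurd (hp.trans hq.symm) hpq)
    simpa using h

end PQSM
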